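/- arXiv:1709.00890 — 2 statements merged into one kernel-verified Lean document; each statement's English description precedes it below -/
import Mathlib

section
/- Let (Yₜ) be a stochastic process taking values in [0,b] ⊂ ℝ, let T = min{t ≥ 0 : Yₜ = 0}, and suppose E[T] < ∞. If there is ε > 0 such that for all t, E[Yₜ₊₁ − Yₜ | Yₜ > 0, Y₀,...,Yₜ] ≤ −ε, then E[T | Y₀] ≤ b/ε. -/
open MeasureTheory Filter

private lemma drift_sum_ite_lt (c n : ℕ) (f : ℕ → ℝ) :
    (∑ t ∈ Finset.range n, if t < c then f t else 0) = ∑ t ∈ Finset.range (min c n), f t := by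
  rw [← Finset.sum_subset (Finset.range_subset_range.2 (min_le_right c n))
      (fun x hx hx' => ?_)]
  · exact Finset.sum_congr rfl fun t ht =>
      if_pos (lt_of_lt_of_le (Finset.mem_range.1 ht) (min_le_left c n))
  · rw [Finset.mem_range] at hx hx'
    exact if_neg (fun hc => hx' (lt_min hc hx))

private lemma drift_key {Ω : Type*} {mΩ : MeasurableSpace Ω} (μ : Measure Ω)
    [IsProbabilityMeasure μ] (Y : ℕ → Ω → ℝ) (ℱ : Filtration ℕ mΩ)
    (hadapted : Adapted ℱ Y) (b : ℝ) (hb : 0 < b)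
    (hrange : ∀ t, ∀ᵐ ω ∂μ, Y t ω ∈ Set.Icc 0 b)
    (T : Ω → ℕ) (hT : ∀ ω, T ω = sInf {t | Y t ω = 0})
    (hreach : ∀ᵐ ω ∂μ, ∃ t, Y t ω = 0)
    (hTint : Integrable (fun ω => (T ω : ℝ)) μ)
    (ε : ℝ) (hε : 0 < ε)
    (hdrift : ∀ t, ∀ᵐ ω ∂μ, 0 < Y t ω →
      (μ[fun ω => Y (t + 1) ω - Y t ω | ℱ t]) ω ≤ -ε)
    (s : Set Ω) (hsF : MeasurableSet[ℱ 0] s) :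
    ∫ ω in s, (T ω : ℝ) ∂μ ≤ (b / ε) * (μ s).toReal := by
  classical
  have hs' : MeasurableSet s := ℱ.le 0 s hsF
  -- integrability of each Y t
  have hint : ∀ t, Integrable (Y t) μ := by
    intro t
    refine ⟨((hadapted t).mono (ℱ.le t) le_rfl).aestronglyMeasurable,
      HasFiniteIntegral.of_bounded (C := b) ?_⟩
    filter_upwards [hrange t] with ω h
    rw [Real.norm_eq_abs, abs_le]; exact ⟨by linarith [h.1], h.2⟩
  -- the "not yet hit zero" events
  set A : ℕ → Set Ω := fun t => {ω | ∀ k ≤ t, Y k ω ≠ 0} with hA_def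
  have hA : ∀ t, MeasurableSet[ℱ t] (A t) := by
    intro t
    have : A t = ⋂ (k : ℕ) (_ : k ≤ t), {ω | Y k ω ≠ 0} := by
      ext ω; simp [hA_def]
    rw [this]
    refine MeasurableSet.iInter fun k => MeasurableSet.iInter fun hk => ?_
    have hk' : Measurable[ℱ t] (Y k) :=
      ((hadapted k).mono (ℱ.mono hk) le_rfl)
    exact (hk' (measurableSet_singleton 0)).compl
  have hBm : ∀ t, MeasurableSet (s ∩ A t) := fun t =>
    hs'.inter (ℱ.le t _ (hA t))
  -- the good event
  have hgood : ∀ᵐ ω ∂μ, (∀ t, Y t ω ∈ Set.Icc 0 b) ∧ ∃ t, Y t ω = 0 :=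
    ((ae_all_iff.2 hrange).and hreach)
  -- membership in A t characterizes T ω > t for good ω
  have hmemA : ∀ ω, (∃ t, Y t ω = 0) → ∀ t, ω ∈ A t ↔ t < T ω := by
    intro ω hr t
    constructor
    · intro hω
      by_contra h
      push_neg at h
      have hYT : Y (T ω) ω = 0 := by
        have := Nat.sInf_mem (s := {t | Y t ω = 0}) hr
        rw [← hT ω] at this
        exact this
      exact hω (T ω) h hYT
    · intro h k hk hY
      have : T ω ≤ k := by
        rw [hT ω]; exact Nat.sInf_le hY
      omega
  -- the one-step drift inequality on s ∩ A t
  have step : ∀ t, ε * (μ (s ∩ A t)).toReal ≤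
      ∫ ω in s ∩ A t, (Y t ω - Y (t + 1) ω) ∂μ := by
    intro t
    have hB : MeasurableSet[ℱ t] (s ∩ A t) :=
      ((ℱ.mono (Nat.zero_le t)) s hsF).inter (hA t)
    have hd : Integrable (fun ω => Y (t + 1) ω - Y t ω) μ := (hint (t + 1)).sub (hint t)
    have eq1 : ∫ ω in s ∩ A t, (Y (t + 1) ω - Y t ω) ∂μ
        = ∫ ω in s ∩ A t, (μ[fun ω => Y (t + 1) ω - Y t ω | ℱ t]) ω ∂μ :=
      (setIntegral_condExp (ℱ.le t) hd hB).symm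
    have hae : (fun ω => (μ[fun ω => Y (t + 1) ω - Y t ω | ℱ t]) ω)
        ≤ᵐ[μ.restrict (s ∩ A t)] fun _ => -ε := by
      filter_upwards [ae_restrict_of_ae (hdrift t), ae_restrict_of_ae (hrange t),
        ae_restrict_mem (hBm t)] with ω h1 h2 hmem
      exact h1 (lt_of_le_of_ne h2.1 (Ne.symm (hmem.2 t le_rfl)))
    have ineq : ∫ ω in s ∩ A t, (μ[fun ω => Y (t + 1) ω - Y t ω | ℱ t]) ω ∂μ
        ≤ ∫ _ω in s ∩ A t, (-ε) ∂μ :=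
      setIntegral_mono_ae_restrict integrable_condExp.integrableOn
        (integrableOn_const (measure_ne_top μ _) enorm_ne_top) hae
    have hconst : ∫ _ω in s ∩ A t, (-ε) ∂μ = -(ε * (μ (s ∩ A t)).toReal) := by
      rw [setIntegral_const, smul_eq_mul, measureReal_def]; ring
    have hswap : ∫ ω in s ∩ A t, (Y t ω - Y (t + 1) ω) ∂μ
        = -∫ ω in s ∩ A t, (Y (t + 1) ω - Y t ω) ∂μ := by
      rw [← integral_neg]
      exact integral_congr_ae (ae_of_all _ fun ω => by ring)
    rw [hswap, eq1]
    have := ineq.trans_eq hconst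
    linarith
  -- per-n bound
  have keyn : ∀ n : ℕ, ε * ∫ ω, Set.indicator s (fun ω => (min (T ω) n : ℝ)) ω ∂μ
      ≤ b * (μ s).toReal := by
    intro n
    -- LHS rewriting
    have hL : ∫ ω, Set.indicator s (fun ω => (min (T ω) n : ℝ)) ω ∂μ
        = ∑ t ∈ Finset.range n, (μ (s ∩ A t)).toReal := by
      have h1 : ∀ t, (μ (s ∩ A t)).toReal
          = ∫ ω, Set.indicator (s ∩ A t) (fun _ => (1 : ℝ)) ω ∂μ := by
        intro t
        rw [integral_indicator (hBm t), setIntegral_const, smul_eq_mul, mul_one, measureReal_def]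
      simp_rw [h1]
      rw [← integral_finset_sum _ (fun t _ =>
        (integrable_const (1 : ℝ)).indicator (hBm t))]
      refine integral_congr_ae ?_
      filter_upwards [hgood] with ω hω
      by_cases hωs : ω ∈ s
      · rw [Set.indicator_of_mem hωs]
        have h2 : ∀ t, Set.indicator (s ∩ A t) (fun _ => (1 : ℝ)) ω
            = if t < T ω then (1 : ℝ) else 0 := by
          intro t
          by_cases hA' : ω ∈ A t
          · rw [Set.indicator_of_mem (Set.mem_inter hωs hA'), if_pos ((hmemA ω hω.2 t).1 hA')]
          · rw [Set.indicator_of_notMem (fun hc => hA' hc.2),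
              if_neg (fun hc => hA' ((hmemA ω hω.2 t).2 hc))]
        simp_rw [h2]
        rw [drift_sum_ite_lt (T ω) n (fun _ => (1 : ℝ))]
        simp
      · rw [Set.indicator_of_notMem hωs]
        symm
        refine Finset.sum_eq_zero fun t _ => ?_
        exact Set.indicator_of_notMem (fun hc => hωs hc.1) _
    -- RHS bound
    have hR : ∑ t ∈ Finset.range n, ∫ ω in s ∩ A t, (Y t ω - Y (t + 1) ω) ∂μ
        ≤ b * (μ s).toReal := by
      have hintt : ∀ t, Integrable
          (Set.indicator (s ∩ A t) (fun ω => Y t ω - Y (t + 1) ω)) μ :=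
        fun t => ((hint t).sub (hint (t + 1))).indicator (hBm t)
      calc ∑ t ∈ Finset.range n, ∫ ω in s ∩ A t, (Y t ω - Y (t + 1) ω) ∂μ
          = ∫ ω, ∑ t ∈ Finset.range n,
            Set.indicator (s ∩ A t) (fun ω => Y t ω - Y (t + 1) ω) ω ∂μ := by
            rw [integral_finset_sum _ (fun t _ => hintt t)]
            exact Finset.sum_congr rfl fun t _ => (integral_indicator (hBm t)).symm
        _ ≤ ∫ ω, Set.indicator s (fun _ => b) ω ∂μ := by
            refine integral_mono_ae (integrable_finset_sum _ (fun t _ => hintt t))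
              ((integrable_const b).indicator hs') ?_
            filter_upwards [hgood] with ω hω
            by_cases hωs : ω ∈ s
            · rw [Set.indicator_of_mem hωs]
              have h2 : ∀ t, Set.indicator (s ∩ A t) (fun ω => Y t ω - Y (t + 1) ω) ω
                  = if t < T ω then Y t ω - Y (t + 1) ω else 0 := by
                intro t
                by_cases hA' : ω ∈ A t
                · rw [Set.indicator_of_mem (Set.mem_inter hωs hA'), if_pos ((hmemA ω hω.2 t).1 hA')]
                · rw [Set.indicator_of_notMem (fun hc => hA' hc.2),
                    if_neg (fun hc => hA' ((hmemA ω hω.2 t).2 hc))]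
              simp_rw [h2]
              rw [drift_sum_ite_lt (T ω) n (fun t => Y t ω - Y (t + 1) ω),
                Finset.sum_range_sub' (fun t => Y t ω) (min (T ω) n)]
              have h0 := hω.1 0
              have hmin := hω.1 (min (T ω) n)
              simp only [Set.mem_Icc] at h0 hmin
              linarith [h0.2, hmin.1]
            · rw [Set.indicator_of_notMem hωs]
              refine le_of_eq (Finset.sum_eq_zero fun t _ => ?_)
              exact Set.indicator_of_notMem (fun hc => hωs hc.1) _
        _ = b * (μ s).toReal := by
            rw [integral_indicator hs', setIntegral_const, smul_eq_mul, mul_comm, measureReal_def]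
    calc ε * ∫ ω, Set.indicator s (fun ω => (min (T ω) n : ℝ)) ω ∂μ
        = ∑ t ∈ Finset.range n, ε * (μ (s ∩ A t)).toReal := by
          rw [hL, Finset.mul_sum]
      _ ≤ ∑ t ∈ Finset.range n, ∫ ω in s ∩ A t, (Y t ω - Y (t + 1) ω) ∂μ :=
          Finset.sum_le_sum fun t _ => step t
      _ ≤ b * (μ s).toReal := hR
  -- take n → ∞
  have hTmeas : ∀ n : ℕ, AEStronglyMeasurable
      (fun ω => Set.indicator s (fun ω => (min (T ω) n : ℝ)) ω) μ := by
    intro n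
    have h1 : AEMeasurable (fun ω => (min (T ω) n : ℝ)) μ := by
      have h2 : AEMeasurable (fun ω => (T ω : ℝ)) μ := hTint.1.aemeasurable
      have h3 : (fun ω => (min (T ω) n : ℝ)) = fun ω => min ((T ω : ℝ)) (n : ℝ) := by
        funext ω; push_cast; rfl
      rw [h3]
      exact h2.min aemeasurable_const
    exact (h1.indicator hs').aestronglyMeasurable
  have htend : Tendsto (fun n : ℕ => ∫ ω, Set.indicator s (fun ω => (min (T ω) n : ℝ)) ω ∂μ)
      atTop (nhds (∫ ω, Set.indicator s (fun ω => (T ω : ℝ)) ω ∂μ)) := by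
    refine tendsto_integral_of_dominated_convergence (fun ω => (T ω : ℝ))
      hTmeas hTint ?_ ?_
    · intro n
      refine ae_of_all _ fun ω => ?_
      by_cases hωs : ω ∈ s
      · rw [Set.indicator_of_mem hωs, Real.norm_eq_abs,
          abs_of_nonneg (by positivity)]
        exact min_le_left _ _
      · rw [Set.indicator_of_notMem hωs]
        simp
    · refine ae_of_all _ fun ω => ?_
      refine Tendsto.congr' ?_ (tendsto_const_nhds
        (x := Set.indicator s (fun ω => (T ω : ℝ)) ω))
      filter_upwards [eventually_ge_atTop (T ω)] with n hn
      by_cases hωs : ω ∈ s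
      · have hcast : ((T ω : ℝ)) ≤ (n : ℝ) := by exact_mod_cast hn
        rw [Set.indicator_of_mem hωs, Set.indicator_of_mem hωs]
        simp [min_eq_left hcast]
      · rw [Set.indicator_of_notMem hωs, Set.indicator_of_notMem hωs]
  have hlim : ε * ∫ ω, Set.indicator s (fun ω => (T ω : ℝ)) ω ∂μ ≤ b * (μ s).toReal :=
    le_of_tendsto (htend.const_mul ε) (Eventually.of_forall keyn)
  rw [integral_indicator hs'] at hlim
  rw [div_mul_eq_mul_div, le_div_iff₀ hε, mul_comm]
  linarith

theorem additive_drift_upper {Ω : Type*} {mΩ : MeasurableSpace Ω} (μ : Measure Ω)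
    [IsProbabilityMeasure μ] (Y : ℕ → Ω → ℝ) (ℱ : Filtration ℕ mΩ)
    (hadapted : Adapted ℱ Y) (b : ℝ) (hb : 0 < b)
    (hrange : ∀ t, ∀ᵐ ω ∂μ, Y t ω ∈ Set.Icc 0 b)
    (T : Ω → ℕ) (hT : ∀ ω, T ω = sInf {t | Y t ω = 0})
    (hreach : ∀ᵐ ω ∂μ, ∃ t, Y t ω = 0)
    (hTint : Integrable (fun ω => (T ω : ℝ)) μ)
    (ε : ℝ) (hε : 0 < ε)
    (hdrift : ∀ t, ∀ᵐ ω ∂μ, 0 < Y t ω →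
      (μ[fun ω => Y (t + 1) ω - Y t ω | ℱ t]) ω ≤ -ε) :
    ∀ᵐ ω ∂μ, (μ[fun ω => (T ω : ℝ) | MeasurableSpace.comap (Y 0) inferInstance]) ω ≤
      b / ε := by
  have hm0 : MeasurableSpace.comap (Y 0) inferInstance ≤ ℱ 0 :=
    measurable_iff_comap_le.mp (hadapted 0)
  have hm : MeasurableSpace.comap (Y 0) inferInstance ≤ mΩ := hm0.trans (ℱ.le 0)
  haveI : SigmaFinite (μ.trim hm) := by infer_instance
  have hcond_sm : StronglyMeasurable[MeasurableSpace.comap (Y 0) inferInstance]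
      (μ[fun ω => (T ω : ℝ) | MeasurableSpace.comap (Y 0) inferInstance]) :=
    stronglyMeasurable_condExp
  refine ae_le_of_ae_le_trim (hm := hm) (f₂ := fun _ => b / ε) ?_
  refine ae_le_of_forall_setIntegral_le
    (integrable_condExp.trim hm hcond_sm)
    ((integrable_const (b / ε)).trim hm stronglyMeasurable_const)
    fun t ht hμt => ?_
  rw [← setIntegral_trim hm hcond_sm ht, ← setIntegral_trim hm stronglyMeasurable_const ht]
  rw [setIntegral_condExp hm hTint ht, setIntegral_const, smul_eq_mul, mul_comm]
  exact drift_key μ Y ℱ hadapted b hb hrange T hT hreach hTint ε hε hdrift t (hm0 t ht)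
end

section
/- Consider a sequential process over levels 1,...,m where, whenever the process is at level i < m, it moves to some level j > i with probability at least sᵢ > 0 in each step (independently given the history), and the process never decreases in level. Then the expected number of steps until reaching level m is at most Σ_{i=1}^{m−1} 1/sᵢ. -/
open MeasureTheory
open scoped ENNReal

theorem fitness_levels_upper_bound {Ω : Type*} {mΩ : MeasurableSpace Ω} (μ : Measure Ω)
    [IsProbabilityMeasure μ] (m : ℕ) (hm : 1 ≤ m)
    (L : ℕ → Ω → ℕ) (ℱ : Filtration ℕ mΩ) (hadapted : Adapted ℱ L)
    (hrange : ∀ t ω, L t ω ∈ Set.Icc 1 m)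
    (hmono : ∀ t ω, L t ω ≤ L (t + 1) ω)
    (s : ℕ → ℝ) (hs : ∀ i, 1 ≤ i → i < m → 0 < s i)
    (hstep : ∀ t i, 1 ≤ i → i < m → ∀ᵐ ω ∂μ, L t ω = i →
      s i ≤ (μ[Set.indicator {ω | i < L (t + 1) ω} (fun _ => (1 : ℝ)) | ℱ t]) ω)
    (T : Ω → ℕ) (hT : ∀ ω, T ω = sInf {t | L t ω = m}) :
    (∫⁻ ω, (T ω : ℝ≥0∞) ∂μ) ≤ ENNReal.ofReal (∑ i ∈ Finset.Ico 1 m, 1 / s i) := by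
  -- measurability of each L t w.r.t. ℱ t and mΩ
  have hLf : ∀ t, Measurable[ℱ t] (L t) := fun t => hadapted t
  have hL : ∀ t, Measurable (L t) := fun t => (hLf t).mono (ℱ.le t) le_rfl
  set E : ℕ → ℕ → Set Ω := fun t i => {ω | L t ω = i} with hE
  set D : ℕ → ℕ → Set Ω := fun t i => {ω | L t ω ≤ i} with hD
  have hEmeas : ∀ t i, MeasurableSet (E t i) := fun t i =>
    (hL t) (measurableSet_singleton i)
  have hEmeasF : ∀ t i, MeasurableSet[ℱ t] (E t i) := fun t i =>
    (hLf t) (measurableSet_singleton i)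
  have hDmeas : ∀ t i, MeasurableSet (D t i) := fun t i =>
    (hL t) measurableSet_Iic
  -- Key one-step bound
  have key : ∀ i, 1 ≤ i → i < m → ∀ t,
      s i * (μ (E t i)).toReal ≤ (μ (D t i)).toReal - (μ (D (t+1) i)).toReal := by
    intro i hi1 him t
    set A : Set Ω := {ω | i < L (t+1) ω} with hA
    have hAmeas : MeasurableSet A := (hL (t+1)) measurableSet_Ioi
    set f : Ω → ℝ := Set.indicator A (fun _ => (1:ℝ)) with hf
    have hfint : Integrable f μ := (integrable_const (1:ℝ)).indicator hAmeas
    have h1 : ∫ x in E t i, (μ[f | ℱ t]) x ∂μ = ∫ x in E t i, f x ∂μ :=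
      setIntegral_condExp (ℱ.le t) hfint (hEmeasF t i)
    have h2 : ∫ x in E t i, f x ∂μ = (μ (E t i ∩ A)).toReal := by
      rw [hf, setIntegral_indicator hAmeas, setIntegral_const, smul_eq_mul, mul_one]; rfl
    have h3 : s i * (μ (E t i)).toReal ≤ ∫ x in E t i, (μ[f | ℱ t]) x ∂μ := by
      have hconst : ∫ x in E t i, s i ∂μ = (μ (E t i)).toReal * s i := by
        rw [setIntegral_const, smul_eq_mul]; rfl
      rw [mul_comm, ← hconst]
      refine setIntegral_mono_ae_restrict (integrableOn_const (measure_ne_top μ _))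
        integrable_condExp.integrableOn ?_
      exact (ae_restrict_iff' (hEmeas t i)).2 (hstep t i hi1 him)
    have hsub : E t i ∩ A ⊆ D t i \ D (t+1) i := by
      intro ω hω
      simp only [hE, hA, hD, Set.mem_inter_iff, Set.mem_setOf_eq, Set.mem_diff,
        not_le] at hω ⊢
      omega
    have hDsub : D (t+1) i ⊆ D t i := fun ω hω => le_trans (hmono t ω) hω
    have hdiff : μ (D t i \ D (t+1) i) = μ (D t i) - μ (D (t+1) i) :=
      measure_diff hDsub (hDmeas (t+1) i).nullMeasurableSet (measure_ne_top μ _)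
    calc s i * (μ (E t i)).toReal ≤ (μ (E t i ∩ A)).toReal := by
          rw [← h2, ← h1]; exact h3
      _ ≤ (μ (D t i \ D (t+1) i)).toReal :=
          ENNReal.toReal_mono (measure_ne_top μ _) (measure_mono hsub)
      _ = (μ (D t i)).toReal - (μ (D (t+1) i)).toReal := by
          rw [hdiff, ENNReal.toReal_sub_of_le (measure_mono hDsub) (measure_ne_top μ _)]
  -- per-level total time bound
  have level : ∀ i, 1 ≤ i → i < m →
      (∑' t, μ (E t i)) ≤ ENNReal.ofReal (1 / s i) := by
    intro i hi1 him
    have hsi := hs i hi1 him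
    rw [ENNReal.tsum_eq_iSup_sum]
    refine iSup_le fun F => ?_
    calc ∑ t ∈ F, μ (E t i) ≤ ∑ t ∈ Finset.range ((F.sup id).succ), μ (E t i) :=
          Finset.sum_le_sum_of_subset (F.subset_range_sup_succ)
      _ ≤ ENNReal.ofReal (1 / s i) := by
          set N := (F.sup id).succ
          have hsum : ∑ t ∈ Finset.range N, (μ (E t i)).toReal ≤ 1 / s i := by
            have htel : ∑ t ∈ Finset.range N, (s i * (μ (E t i)).toReal)
                ≤ (μ (D 0 i)).toReal - (μ (D N i)).toReal := by
              rw [← Finset.sum_range_sub' (fun t => (μ (D t i)).toReal) N]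
              exact Finset.sum_le_sum fun t _ => key i hi1 him t
            have h01 : (μ (D 0 i)).toReal - (μ (D N i)).toReal ≤ 1 := by
              have := ENNReal.toReal_nonneg (a := μ (D N i))
              have hle : (μ (D 0 i)).toReal ≤ 1 := by
                have := prob_le_one (μ := μ) (s := D 0 i)
                simpa using ENNReal.toReal_mono ENNReal.one_ne_top this
              linarith
            rw [← Finset.mul_sum] at htel
            rw [le_div_iff₀ hsi, mul_comm]
            linarith
          calc ∑ t ∈ Finset.range N, μ (E t i)
              = ENNReal.ofReal (∑ t ∈ Finset.range N, (μ (E t i)).toReal) := by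
                rw [ENNReal.ofReal_sum_of_nonneg (fun _ _ => ENNReal.toReal_nonneg)]
                exact Finset.sum_congr rfl fun t _ =>
                  (ENNReal.ofReal_toReal (measure_ne_top μ _)).symm
            _ ≤ ENNReal.ofReal (1 / s i) := ENNReal.ofReal_le_ofReal hsum
  -- pointwise: t < T ω → L t ω < m
  have hTlt : ∀ t ω, t < T ω → L t ω < m := by
    intro t ω ht
    by_contra h
    have hsub : L t ω = m := le_antisymm (hrange t ω).2 (not_lt.1 h)
    have : T ω ≤ t := by rw [hT ω]; exact Nat.sInf_le hsub
    omega
  -- split {L t < m} into levels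
  have hsplit : ∀ t, μ {ω | L t ω < m} = ∑ i ∈ Finset.Ico 1 m, μ (E t i) := by
    intro t
    have hset : {ω | L t ω < m} = ⋃ i ∈ Finset.Ico 1 m, E t i := by
      ext ω
      simp only [Set.mem_setOf_eq, Set.mem_iUnion, Finset.mem_Ico, hE]
      constructor
      · intro h; exact ⟨L t ω, ⟨(hrange t ω).1, h⟩, rfl⟩
      · rintro ⟨i, ⟨_, hi⟩, rfl⟩; exact hi
    rw [hset, measure_biUnion_finset ?_ (fun i _ => hEmeas t i)]
    intro i _ j _ hij
    simp only [Function.onFun, Set.disjoint_left]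
    rintro ω h1 h2
    exact hij (h1.symm.trans h2)
  -- main computation
  calc (∫⁻ ω, (T ω : ℝ≥0∞) ∂μ)
      ≤ ∫⁻ ω, ∑' t, Set.indicator {ω | L t ω < m} (1 : Ω → ℝ≥0∞) ω ∂μ := by
        refine lintegral_mono fun ω => ?_
        calc (T ω : ℝ≥0∞) = ∑ t ∈ Finset.range (T ω), (1:ℝ≥0∞) := by simp
          _ = ∑ t ∈ Finset.range (T ω),
                Set.indicator {ω | L t ω < m} (1 : Ω → ℝ≥0∞) ω := by
              refine Finset.sum_congr rfl fun t ht => ?_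
              exact (Set.indicator_of_mem
                (show ω ∈ {ω | L t ω < m} from hTlt t ω (Finset.mem_range.1 ht)) 1).symm
          _ ≤ ∑' t, Set.indicator {ω | L t ω < m} (1 : Ω → ℝ≥0∞) ω :=
              ENNReal.sum_le_tsum _
    _ = ∑' t, μ {ω | L t ω < m} := by
        have hmlt : ∀ t, MeasurableSet {ω | L t ω < m} := fun t =>
          measurableSet_lt (hL t) measurable_const
        rw [lintegral_tsum fun t => (measurable_one.indicator (hmlt t)).aemeasurable]
        exact tsum_congr fun t => lintegral_indicator_one (hmlt t)
    _ = ∑' t, ∑ i ∈ Finset.Ico 1 m, μ (E t i) := tsum_congr hsplit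
    _ = ∑ i ∈ Finset.Ico 1 m, ∑' t, μ (E t i) := Summable.tsum_finsetSum fun i _ => ENNReal.summable
    _ ≤ ∑ i ∈ Finset.Ico 1 m, ENNReal.ofReal (1 / s i) :=
        Finset.sum_le_sum fun i hi => by
          have := Finset.mem_Ico.1 hi
          exact level i this.1 this.2
    _ = ENNReal.ofReal (∑ i ∈ Finset.Ico 1 m, 1 / s i) := by
        rw [ENNReal.ofReal_sum_of_nonneg fun i hi => by
          have h := Finset.mem_Ico.1 hi
          have := hs i h.1 h.2
          positivity]
end
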